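/- There exists a constant C > 0, depending only on q, such that for all n ∈ ½ℤ₊ with n ≥ 1/2, all half-integers i ∈ {−n, …, n} and j ∈ {−n+1/2, …, n−1/2}, every entry of the 2×2 matrix a⁺_{nij} − (1−q^{2n+2i+2})^{1/2} · diag((1−q^{2n+2j+3})^{1/2}, (1−q^{2n+2j+1})^{1/2}) has absolute value at most C·q^{2n}. -/

import Mathlib

noncomputable section

open Real

/-- The q-number `[m] = (q^m - q^(-m))/(q - q⁻¹)`. -/
def qnum (q m : ℝ) : ℝ := (q ^ m - q ^ (-m)) / (q - q⁻¹)

/-- The 2×2 matrix `a⁺_{nij}`. -/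
def aP (q n i j : ℝ) : Matrix (Fin 2) (Fin 2) ℝ :=
  (q ^ ((i + j - 1/2) / 2) * Real.sqrt (qnum q (n + i + 1))) •
    !![q ^ (-n - 1/2) * Real.sqrt (qnum q (n + j + 3/2)) / qnum q (2*n + 2), 0;
       q ^ ((1:ℝ)/2) * Real.sqrt (qnum q (n - j + 1/2)) / (qnum q (2*n + 1) * qnum q (2*n + 2)),
       q ^ (-n) * Real.sqrt (qnum q (n + j + 1/2)) / qnum q (2*n + 1)]

/-- The 2×2 matrix `a⁻_{nij}`. -/
def aM (q n i j : ℝ) : Matrix (Fin 2) (Fin 2) ℝ :=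
  (q ^ ((i + j - 1/2) / 2) * Real.sqrt (qnum q (n - i))) •
    !![q ^ (n + 1) * Real.sqrt (qnum q (n - j + 1/2)) / qnum q (2*n + 1),
       -(q ^ ((1:ℝ)/2) * Real.sqrt (qnum q (n + j + 1/2)) / (qnum q (2*n) * qnum q (2*n + 1)));
       0, q ^ (n + 1/2) * Real.sqrt (qnum q (n - j - 1/2)) / qnum q (2*n)]

/-- The 2×2 matrix `b⁺_{nij}`. -/
def bP (q n i j : ℝ) : Matrix (Fin 2) (Fin 2) ℝ :=
  (q ^ ((i + j - 1/2) / 2) * Real.sqrt (qnum q (n + i + 1))) •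
    !![Real.sqrt (qnum q (n - j + 3/2)) / qnum q (2*n + 2), 0;
       -(q ^ (-n - 1) * Real.sqrt (qnum q (n + j + 1/2)) / (qnum q (2*n + 1) * qnum q (2*n + 2))),
       q ^ (-(1:ℝ)/2) * Real.sqrt (qnum q (n - j + 1/2)) / qnum q (2*n + 1)]

/-- The 2×2 matrix `b⁻_{nij}`. -/
def bM (q n i j : ℝ) : Matrix (Fin 2) (Fin 2) ℝ :=
  (q ^ ((i + j - 1/2) / 2) * Real.sqrt (qnum q (n - i))) •
    !![-(q ^ (-(1:ℝ)/2) * Real.sqrt (qnum q (n + j + 1/2)) / qnum q (2*n + 1)),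
       -(q ^ n * Real.sqrt (qnum q (n - j + 1/2)) / (qnum q (2*n) * qnum q (2*n + 1)));
       0, -(Real.sqrt (qnum q (n + j - 1/2)) / qnum q (2*n))]

/-- `n` is a nonnegative half-integer: `n ∈ ½ℤ₊ = {0, 1/2, 1, 3/2, …}`. -/
def HalfNat (n : ℝ) : Prop := ∃ N : ℕ, (N : ℝ) = 2 * n

/-- `i ∈ {-n, -n+1, …, n}`. -/
def IdxRange (n i : ℝ) : Prop := (∃ k : ℕ, (k : ℝ) = i + n) ∧ i ≤ n

/-- `j ∈ {-n+1/2, -n+3/2, …, n-1/2}`. -/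
def JRangeIn (n j : ℝ) : Prop := (∃ k : ℕ, (k : ℝ) = j + n - 1/2) ∧ j ≤ n - 1/2

/-- `j ∈ {-n-1/2, -n+1/2, …, n+1/2}`. -/
def JRangeOut (n j : ℝ) : Prop := (∃ k : ℕ, (k : ℝ) = j + n + 1/2) ∧ j ≤ n + 1/2

lemma qnum_eq {q : ℝ} (hq0 : 0 < q) (hq1 : q < 1) (m : ℝ) :
    qnum q m = q ^ (1 - m) * (1 - q ^ (2*m)) / (1 - q^2) := by
  have ht : (0:ℝ) < q ^ m := Real.rpow_pos_of_pos hq0 m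
  have h1 : q ^ (-m) = (q ^ m)⁻¹ := Real.rpow_neg hq0.le m
  have h2 : q ^ (2*m) = (q ^ m)^2 := by
    rw [mul_comm, Real.rpow_mul hq0.le]; norm_num [Real.rpow_two]
  have h3 : q ^ (1 - m) = q * (q ^ m)⁻¹ := by
    rw [sub_eq_add_neg, Real.rpow_add hq0, Real.rpow_one, h1]
  have hne2 : (1:ℝ) - q^2 ≠ 0 := by nlinarith
  have hq : q ≠ 0 := hq0.ne'
  rw [qnum, h1, h2, h3]
  have hsub : q - q⁻¹ = -(1 - q^2)/q := by field_simp; ring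
  rw [hsub]
  rw [div_eq_div_iff (div_ne_zero (neg_ne_zero.mpr hne2) hq) hne2]
  field_simp
  ring

lemma sqrt_qnum {q : ℝ} (hq0 : 0 < q) (hq1 : q < 1) (m : ℝ) :
    Real.sqrt (qnum q m) = q ^ ((1 - m)/2) * Real.sqrt (1 - q ^ (2*m)) / Real.sqrt (1 - q^2) := by
  rw [qnum_eq hq0 hq1, Real.sqrt_div' , Real.sqrt_mul (Real.rpow_nonneg hq0.le _),
    Real.sqrt_eq_rpow (q ^ (1-m)), ← Real.rpow_mul hq0.le]
  · ring_nf
  · nlinarith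

lemma pow_split {q : ℝ} (hq0 : 0 < q) (e x y z w : ℝ) (a b c d : ℤ)
    (h : e = a*x + b*y + c*z + d*w) :
    q ^ e = (q^x)^a * (q^y)^b * (q^z)^c * (q^w)^d := by
  subst h
  rw [Real.rpow_add hq0, Real.rpow_add hq0, Real.rpow_add hq0]
  congr 1
  · congr 1
    · congr 1
      · rw [mul_comm, Real.rpow_mul hq0.le, Real.rpow_intCast]
      · rw [mul_comm, Real.rpow_mul hq0.le, Real.rpow_intCast]
    · rw [mul_comm, Real.rpow_mul hq0.le, Real.rpow_intCast]
  · rw [mul_comm, Real.rpow_mul hq0.le, Real.rpow_intCast]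

lemma entry00 {q : ℝ} (hq0 : 0 < q) (hq1 : q < 1) (n i j : ℝ)
    (hD2 : (0:ℝ) < 1 - q^(4*n+4)) :
    aP q n i j 0 0 =
      Real.sqrt (1 - q^(2*n+2*i+2)) * Real.sqrt (1 - q^(2*n+2*j+3)) / (1 - q^(4*n+4)) := by
  have h1q2 : (0:ℝ) ≤ 1 - q^2 := by nlinarith
  show q ^ ((i + j - 1/2) / 2) * Real.sqrt (qnum q (n + i + 1)) *
      (q ^ (-n - 1/2) * Real.sqrt (qnum q (n + j + 3/2)) / qnum q (2*n + 2)) = _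
  rw [sqrt_qnum hq0 hq1 (n+i+1), sqrt_qnum hq0 hq1 (n+j+3/2), qnum_eq hq0 hq1 (2*n+2)]
  rw [show 2*(n+i+1) = 2*n+2*i+2 by ring, show 2*(n+j+3/2) = 2*n+2*j+3 by ring,
      show 2*(2*n+2) = 4*n+4 by ring]
  rw [pow_split hq0 ((i+j-1/2)/2) (n/2) (i/2) (j/2) (1/4) 0 1 1 (-1) (by push_cast; ring),
      pow_split hq0 ((1-(n+i+1))/2) (n/2) (i/2) (j/2) (1/4) (-1) (-1) 0 0 (by push_cast; ring),
      pow_split hq0 (-n-1/2) (n/2) (i/2) (j/2) (1/4) (-2) 0 0 (-2) (by push_cast; ring),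
      pow_split hq0 ((1-(n+j+3/2))/2) (n/2) (i/2) (j/2) (1/4) (-1) 0 (-1) (-1) (by push_cast; ring),
      pow_split hq0 (1-(2*n+2)) (n/2) (i/2) (j/2) (1/4) (-4) 0 0 (-4) (by push_cast; ring)]
  have hXp : (0:ℝ) < q ^ (n/2) := Real.rpow_pos_of_pos hq0 _
  have hYp : (0:ℝ) < q ^ (i/2) := Real.rpow_pos_of_pos hq0 _
  have hZp : (0:ℝ) < q ^ (j/2) := Real.rpow_pos_of_pos hq0 _
  have hWp : (0:ℝ) < q ^ ((1:ℝ)/4) := Real.rpow_pos_of_pos hq0 _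
  set c := Real.sqrt (1 - q^2) with hc
  rw [show (1:ℝ)-q^2 = c^2 from (Real.sq_sqrt h1q2).symm]
  have hcp : (0:ℝ) < c := by rw [hc]; apply Real.sqrt_pos.mpr; nlinarith
  clear_value c
  generalize q ^ (n/2) = X at *
  generalize q ^ (i/2) = Y at *
  generalize q ^ (j/2) = Z at *
  generalize q ^ ((1:ℝ)/4) = W at *
  generalize Real.sqrt (1 - q^(2*n+2*i+2)) = sA at *
  generalize Real.sqrt (1 - q^(2*n+2*j+3)) = sB at *
  generalize hD : (1:ℝ) - q^(4*n+4) = D at *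
  simp only [zpow_neg, show (4:ℤ)=(4:ℕ) by rfl, show (2:ℤ)=(2:ℕ) by rfl,
    show (1:ℤ)=(1:ℕ) by rfl, show (6:ℤ)=(6:ℕ) by rfl, zpow_natCast, zpow_zero, zpow_one]
  field_simp

lemma entry01 (q n i j : ℝ) : aP q n i j 0 1 = 0 := by simp [aP]

lemma entry11 {q : ℝ} (hq0 : 0 < q) (hq1 : q < 1) (n i j : ℝ)
    (hD1 : (0:ℝ) < 1 - q^(4*n+2)) :
    aP q n i j 1 1 =
      Real.sqrt (1 - q^(2*n+2*i+2)) * Real.sqrt (1 - q^(2*n+2*j+1)) / (1 - q^(4*n+2)) := by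
  have h1q2 : (0:ℝ) ≤ 1 - q^2 := by nlinarith
  show q ^ ((i + j - 1/2) / 2) * Real.sqrt (qnum q (n + i + 1)) *
      (q ^ (-n) * Real.sqrt (qnum q (n + j + 1/2)) / qnum q (2*n + 1)) = _
  rw [sqrt_qnum hq0 hq1 (n+i+1), sqrt_qnum hq0 hq1 (n+j+1/2), qnum_eq hq0 hq1 (2*n+1)]
  rw [show 2*(n+i+1) = 2*n+2*i+2 by ring, show 2*(n+j+1/2) = 2*n+2*j+1 by ring,
      show 2*(2*n+1) = 4*n+2 by ring]
  rw [pow_split hq0 ((i+j-1/2)/2) (n/2) (i/2) (j/2) (1/4) 0 1 1 (-1) (by push_cast; ring),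
      pow_split hq0 ((1-(n+i+1))/2) (n/2) (i/2) (j/2) (1/4) (-1) (-1) 0 0 (by push_cast; ring),
      pow_split hq0 (-n) (n/2) (i/2) (j/2) (1/4) (-2) 0 0 0 (by push_cast; ring),
      pow_split hq0 ((1-(n+j+1/2))/2) (n/2) (i/2) (j/2) (1/4) (-1) 0 (-1) 1 (by push_cast; ring),
      pow_split hq0 (1-(2*n+1)) (n/2) (i/2) (j/2) (1/4) (-4) 0 0 0 (by push_cast; ring)]
  have hXp : (0:ℝ) < q ^ (n/2) := Real.rpow_pos_of_pos hq0 _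
  have hYp : (0:ℝ) < q ^ (i/2) := Real.rpow_pos_of_pos hq0 _
  have hZp : (0:ℝ) < q ^ (j/2) := Real.rpow_pos_of_pos hq0 _
  have hWp : (0:ℝ) < q ^ ((1:ℝ)/4) := Real.rpow_pos_of_pos hq0 _
  set c := Real.sqrt (1 - q^2) with hc
  rw [show (1:ℝ)-q^2 = c^2 from (Real.sq_sqrt h1q2).symm]
  have hcp : (0:ℝ) < c := by rw [hc]; apply Real.sqrt_pos.mpr; nlinarith
  clear_value c
  generalize q ^ (n/2) = X at *
  generalize q ^ (i/2) = Y at *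
  generalize q ^ (j/2) = Z at *
  generalize q ^ ((1:ℝ)/4) = W at *
  generalize Real.sqrt (1 - q^(2*n+2*i+2)) = sA at *
  generalize Real.sqrt (1 - q^(2*n+2*j+1)) = sB at *
  generalize hD : (1:ℝ) - q^(4*n+2) = D at *
  simp only [zpow_neg, show (4:ℤ)=(4:ℕ) by rfl, show (2:ℤ)=(2:ℕ) by rfl,
    show (1:ℤ)=(1:ℕ) by rfl, show (6:ℤ)=(6:ℕ) by rfl, zpow_natCast, zpow_zero, zpow_one]
  field_simp

lemma entry10 {q : ℝ} (hq0 : 0 < q) (hq1 : q < 1) (n i j : ℝ)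
    (hD1 : (0:ℝ) < 1 - q^(4*n+2)) (hD2 : (0:ℝ) < 1 - q^(4*n+4)) :
    aP q n i j 1 0 =
      q^(3*n+j+3/2) * (Real.sqrt (1 - q^(2*n+2*i+2)) * Real.sqrt (1 - q^(2*n-2*j+1)))
        * (1 - q^2) / ((1 - q^(4*n+2)) * (1 - q^(4*n+4))) := by
  have h1q2 : (0:ℝ) ≤ 1 - q^2 := by nlinarith
  show q ^ ((i + j - 1/2) / 2) * Real.sqrt (qnum q (n + i + 1)) *
      (q ^ ((1:ℝ)/2) * Real.sqrt (qnum q (n - j + 1/2)) / (qnum q (2*n + 1) * qnum q (2*n + 2))) = _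
  rw [sqrt_qnum hq0 hq1 (n+i+1), sqrt_qnum hq0 hq1 (n-j+1/2), qnum_eq hq0 hq1 (2*n+1),
      qnum_eq hq0 hq1 (2*n+2)]
  rw [show 2*(n+i+1) = 2*n+2*i+2 by ring, show 2*(n-j+1/2) = 2*n-2*j+1 by ring,
      show 2*(2*n+1) = 4*n+2 by ring, show 2*(2*n+2) = 4*n+4 by ring]
  rw [pow_split hq0 ((i+j-1/2)/2) (n/2) (i/2) (j/2) (1/4) 0 1 1 (-1) (by push_cast; ring),
      pow_split hq0 ((1-(n+i+1))/2) (n/2) (i/2) (j/2) (1/4) (-1) (-1) 0 0 (by push_cast; ring),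
      pow_split hq0 ((1:ℝ)/2) (n/2) (i/2) (j/2) (1/4) 0 0 0 2 (by push_cast; ring),
      pow_split hq0 ((1-(n-j+1/2))/2) (n/2) (i/2) (j/2) (1/4) (-1) 0 1 1 (by push_cast; ring),
      pow_split hq0 (1-(2*n+1)) (n/2) (i/2) (j/2) (1/4) (-4) 0 0 0 (by push_cast; ring),
      pow_split hq0 (1-(2*n+2)) (n/2) (i/2) (j/2) (1/4) (-4) 0 0 (-4) (by push_cast; ring),
      pow_split hq0 (3*n+j+3/2) (n/2) (i/2) (j/2) (1/4) 6 0 2 6 (by push_cast; ring)]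
  have hXp : (0:ℝ) < q ^ (n/2) := Real.rpow_pos_of_pos hq0 _
  have hYp : (0:ℝ) < q ^ (i/2) := Real.rpow_pos_of_pos hq0 _
  have hZp : (0:ℝ) < q ^ (j/2) := Real.rpow_pos_of_pos hq0 _
  have hWp : (0:ℝ) < q ^ ((1:ℝ)/4) := Real.rpow_pos_of_pos hq0 _
  set c := Real.sqrt (1 - q^2) with hc
  rw [show (1:ℝ)-q^2 = c^2 from (Real.sq_sqrt h1q2).symm]
  have hcp : (0:ℝ) < c := by rw [hc]; apply Real.sqrt_pos.mpr; nlinarith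
  clear_value c
  generalize q ^ (n/2) = X at *
  generalize q ^ (i/2) = Y at *
  generalize q ^ (j/2) = Z at *
  generalize q ^ ((1:ℝ)/4) = W at *
  generalize Real.sqrt (1 - q^(2*n+2*i+2)) = sA at *
  generalize Real.sqrt (1 - q^(2*n-2*j+1)) = sB at *
  generalize hD1' : (1:ℝ) - q^(4*n+2) = D1 at *
  generalize hD2' : (1:ℝ) - q^(4*n+4) = D2 at *
  simp only [zpow_neg, show (4:ℤ)=(4:ℕ) by rfl, show (2:ℤ)=(2:ℕ) by rfl,
    show (1:ℤ)=(1:ℕ) by rfl, show (6:ℤ)=(6:ℕ) by rfl, zpow_natCast, zpow_zero, zpow_one]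
  field_simp

set_option maxHeartbeats 2000000 in
/-- There is `C > 0` depending only on `q` such that for all `n ∈ ½ℤ₊` with
`n ≥ 1/2`, `i ∈ {-n,…,n}`, `j ∈ {-n+1/2,…,n-1/2}`, every entry of
`a⁺_{nij} - (1-q^(2n+2i+2))^(1/2) diag((1-q^(2n+2j+3))^(1/2), (1-q^(2n+2j+1))^(1/2))`
has absolute value at most `C·q^(2n)`. -/
theorem aPlus_asymptotics (q : ℝ) (hq0 : 0 < q) (hq1 : q < 1) :
    ∃ C : ℝ, 0 < C ∧ ∀ n i j : ℝ, HalfNat n → 1/2 ≤ n → IdxRange n i → JRangeIn n j →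
      ∀ r s : Fin 2,
        |(aP q n i j - Real.sqrt (1 - q ^ (2*n + 2*i + 2)) •
            !![Real.sqrt (1 - q ^ (2*n + 2*j + 3)), 0;
               0, Real.sqrt (1 - q ^ (2*n + 2*j + 1))]) r s|
          ≤ C * q ^ (2 * n) := by
  have h1q2 : (0:ℝ) < 1 - q^2 := by nlinarith
  refine ⟨(1 - q^2)⁻¹, by positivity, ?_⟩
  intro n i j hN hn hI hJ r s
  obtain ⟨⟨ki, hki⟩, hile⟩ := hI
  obtain ⟨⟨kj, hkj⟩, hjle⟩ := hJ
  have hin : (0:ℝ) ≤ i + n := by rw [← hki]; positivity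
  have hjn : (0:ℝ) ≤ j + n - 1/2 := by rw [← hkj]; positivity
  have hn0 : (0:ℝ) ≤ n := le_trans (by norm_num) hn
  -- basic rpow facts
  have rpos : ∀ e : ℝ, (0:ℝ) < q ^ e := fun e => Real.rpow_pos_of_pos hq0 e
  have rlt1 : ∀ e : ℝ, 0 < e → q ^ e < 1 := fun e he => Real.rpow_lt_one hq0.le hq1 he
  have rmono : ∀ a b : ℝ, b ≤ a → q ^ a ≤ q ^ b := fun a b h =>
    Real.rpow_le_rpow_of_exponent_ge hq0 hq1.le h
  have hq2 : q ^ ((2:ℝ)) = q^2 := by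
    rw [show ((2:ℝ)) = ((2:ℕ):ℝ) by norm_num, Real.rpow_natCast]
  -- positivity of denominators
  have hD1 : (0:ℝ) < 1 - q^(4*n+2) := by
    have := rlt1 (4*n+2) (by linarith); linarith
  have hD2 : (0:ℝ) < 1 - q^(4*n+4) := by
    have := rlt1 (4*n+4) (by linarith); linarith
  have hD1ge : 1 - q^2 ≤ 1 - q^(4*n+2) := by
    have : q^(4*n+2) ≤ q^((2:ℝ)) := rmono _ _ (by linarith)
    rw [hq2] at this; linarith
  have hD2ge : 1 - q^2 ≤ 1 - q^(4*n+4) := by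
    have : q^(4*n+4) ≤ q^((2:ℝ)) := rmono _ _ (by linarith)
    rw [hq2] at this; linarith
  -- sqrt bounds
  have sqle1 : ∀ e : ℝ, Real.sqrt (1 - q^e) ≤ 1 := by
    intro e
    have := rpos e
    exact Real.sqrt_le_one.mpr (by linarith)
  have sqnn : ∀ e : ℝ, (0:ℝ) ≤ Real.sqrt (1 - q^e) := fun e => Real.sqrt_nonneg _
  have hCq : (1 - q^2)⁻¹ * q^(2*n) = q^(2*n) / (1-q^2) := by ring
  rw [hCq]
  fin_cases r <;> fin_cases s
  · -- (0,0)
    have h := entry00 hq0 hq1 n i j hD2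
    simp only [Fin.zero_eta, Fin.mk_one, Matrix.sub_apply, Matrix.smul_apply, smul_eq_mul,
      Matrix.cons_val', Matrix.cons_val_zero, Matrix.empty_val', Matrix.cons_val_fin_one,
      Matrix.cons_val_one, Matrix.head_cons, Matrix.head_fin_const, Matrix.of_apply] at h ⊢
    rw [h]
    set sA := Real.sqrt (1 - q^(2*n+2*i+2))
    set sB := Real.sqrt (1 - q^(2*n+2*j+3))
    have heq : sA * sB / (1 - q^(4*n+4)) - sA * sB
        = sA * sB * q^(4*n+4) / (1 - q^(4*n+4)) := by
      rw [eq_div_iff hD2.ne', sub_mul, div_mul_cancel₀ _ hD2.ne']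
      ring
    rw [heq, abs_of_nonneg (by positivity)]
    apply div_le_div₀ (by positivity) _ h1q2 hD2ge
    have h1 : sA ≤ 1 := sqle1 _
    have h2 : sB ≤ 1 := sqle1 _
    have h3 : q^(4*n+4) ≤ q^(2*n) := rmono _ _ (by linarith)
    have h4 := (rpos (4*n+4)).le
    have hsab : sA * sB ≤ 1 := by nlinarith [sqnn (2*n+2*i+2), sqnn (2*n+2*j+3)]
    calc sA * sB * q^(4*n+4) ≤ 1 * q^(4*n+4) := mul_le_mul_of_nonneg_right hsab h4
      _ = q^(4*n+4) := one_mul _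
      _ ≤ q^(2*n) := h3
  · -- (0,1)
    have h := entry01 q n i j
    simp only [Fin.zero_eta, Fin.mk_one, Matrix.sub_apply, Matrix.smul_apply, smul_eq_mul,
      Matrix.cons_val', Matrix.cons_val_zero, Matrix.empty_val', Matrix.cons_val_fin_one,
      Matrix.cons_val_one, Matrix.head_cons, Matrix.head_fin_const, Matrix.of_apply] at h ⊢
    rw [h]
    simp only [mul_zero, sub_zero, abs_zero]
    positivity
  · -- (1,0)
    have h := entry10 hq0 hq1 n i j hD1 hD2
    simp only [Fin.zero_eta, Fin.mk_one, Matrix.sub_apply, Matrix.smul_apply, smul_eq_mul,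
      Matrix.cons_val', Matrix.cons_val_zero, Matrix.empty_val', Matrix.cons_val_fin_one,
      Matrix.cons_val_one, Matrix.head_cons, Matrix.head_fin_const, Matrix.of_apply] at h ⊢
    rw [h]
    simp only [mul_zero, sub_zero]
    rw [abs_of_nonneg (by positivity)]
    have key : q^(2*n) / (1-q^2) = q^(2*n) * (1-q^2) / ((1-q^2) * (1-q^2)) := by
      field_simp
    rw [key]
    apply div_le_div₀ (by positivity) _ (by positivity) _
    · have h1 : Real.sqrt (1 - q^(2*n+2*i+2)) ≤ 1 := sqle1 _
      have h2 : Real.sqrt (1 - q^(2*n-2*j+1)) ≤ 1 := sqle1 _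
      have h3 : q^(3*n+j+3/2) ≤ q^(2*n) := rmono _ _ (by linarith)
      have h4 := (rpos (3*n+j+3/2)).le
      have hsab : Real.sqrt (1 - q^(2*n+2*i+2)) * Real.sqrt (1 - q^(2*n-2*j+1)) ≤ 1 := by
        nlinarith [sqnn (2*n+2*i+2), sqnn (2*n-2*j+1)]
      have h7 : q^(3*n+j+3/2) * (Real.sqrt (1 - q^(2*n+2*i+2)) * Real.sqrt (1 - q^(2*n-2*j+1)))
          ≤ q^(2*n) := by
        calc q^(3*n+j+3/2) * (Real.sqrt (1 - q^(2*n+2*i+2)) * Real.sqrt (1 - q^(2*n-2*j+1)))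
            ≤ q^(3*n+j+3/2) * 1 := mul_le_mul_of_nonneg_left hsab h4
          _ = q^(3*n+j+3/2) := mul_one _
          _ ≤ q^(2*n) := h3
      exact mul_le_mul_of_nonneg_right h7 h1q2.le
    · exact mul_le_mul hD1ge hD2ge h1q2.le (by linarith)
  · -- (1,1)
    have h := entry11 hq0 hq1 n i j hD1
    simp only [Fin.zero_eta, Fin.mk_one, Matrix.sub_apply, Matrix.smul_apply, smul_eq_mul,
      Matrix.cons_val', Matrix.cons_val_zero, Matrix.empty_val', Matrix.cons_val_fin_one,
      Matrix.cons_val_one, Matrix.head_cons, Matrix.head_fin_const, Matrix.of_apply] at h ⊢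
    rw [h]
    set sA := Real.sqrt (1 - q^(2*n+2*i+2))
    set sB := Real.sqrt (1 - q^(2*n+2*j+1))
    have heq : sA * sB / (1 - q^(4*n+2)) - sA * sB
        = sA * sB * q^(4*n+2) / (1 - q^(4*n+2)) := by
      rw [eq_div_iff hD1.ne', sub_mul, div_mul_cancel₀ _ hD1.ne']
      ring
    rw [heq, abs_of_nonneg (by positivity)]
    apply div_le_div₀ (by positivity) _ h1q2 hD1ge
    have h1 : sA ≤ 1 := sqle1 _
    have h2 : sB ≤ 1 := sqle1 _
    have h3 : q^(4*n+2) ≤ q^(2*n) := rmono _ _ (by linarith)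
    have h4 := (rpos (4*n+2)).le
    have hsab : sA * sB ≤ 1 := by nlinarith [sqnn (2*n+2*i+2), sqnn (2*n+2*j+1)]
    calc sA * sB * q^(4*n+2) ≤ 1 * q^(4*n+2) := mul_le_mul_of_nonneg_right hsab h4
      _ = q^(4*n+2) := one_mul _
      _ ≤ q^(2*n) := h3
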